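/- Interchange relation (∗) of the main theorem: let R: ℂ^N → End(ℂ^N⊗ℂ^N) satisfy the zero-weight condition, the translation condition, and the dynamical Yang–Baxter equation (hypotheses (i)–(iii)). Fix n, m ≥ 1 and work on (ℂ^N)^{⊗(n+m)}; define Q_i(x) := Π_{j=m}^{1} R_{i,n+j}(x − 2γh^{(i+1,n)} − 2γh^{(n+j+1,n+m)}) for 1 ≤ i ≤ n, and ℐ^{(n+1,n+m)}(x) := R̂_{n+1,n+2}(x−2γh^{(n+3,n+m)}) ⋯ R̂_{n+m−1,n+m}(x). Then for every x ∈ ℂ^N: Q_1(x) Q_2(x) ⋯ Q_n(x) · ℐ^{(n+1,n+m)}(x) = ℐ^{(n+1,n+m)}(x−2γh^{(1,n)}) · Q_1(x) Q_2(x) ⋯ Q_n(x). -/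

import Mathlib

/- STATEMENT 16: Interchange relation (∗) of the main theorem:
   if R satisfies the zero-weight condition, the translation condition and the
   dynamical Yang–Baxter equation, then Q_1(x)⋯Q_n(x)·𝓘^{(n+1,n+m)}(x)
   = 𝓘^{(n+1,n+m)}(x−2γh^{(1,n)})·Q_1(x)⋯Q_n(x), on (ℂ^N)^{⊗(n+m)}. -/

noncomputable section
open Matrix Complex
open scoped BigOperators

variable (N : ℕ) (γ : ℂ)

/-- S placed in factors 1,2 of (ℂ^N)^{⊗3}, argument shifted by s·h^{(3)} -/
def sh12 (S : (Fin N → ℂ) → Matrix (Fin N × Fin N) (Fin N × Fin N) ℂ)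
    (x : Fin N → ℂ) (s : ℂ) :
    Matrix (Fin N × Fin N × Fin N) (Fin N × Fin N × Fin N) ℂ :=
  fun p q => if p.2.2 = q.2.2 then
    S (x + s • (Pi.single q.2.2 1 : Fin N → ℂ)) (p.1, p.2.1) (q.1, q.2.1) else 0

def sh13 (S : (Fin N → ℂ) → Matrix (Fin N × Fin N) (Fin N × Fin N) ℂ)
    (x : Fin N → ℂ) (s : ℂ) :
    Matrix (Fin N × Fin N × Fin N) (Fin N × Fin N × Fin N) ℂ :=
  fun p q => if p.2.1 = q.2.1 then
    S (x + s • (Pi.single q.2.1 1 : Fin N → ℂ)) (p.1, p.2.2) (q.1, q.2.2) else 0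

def sh23 (S : (Fin N → ℂ) → Matrix (Fin N × Fin N) (Fin N × Fin N) ℂ)
    (x : Fin N → ℂ) (s : ℂ) :
    Matrix (Fin N × Fin N × Fin N) (Fin N × Fin N × Fin N) ℂ :=
  fun p q => if p.1 = q.1 then
    S (x + s • (Pi.single q.1 1 : Fin N → ℂ)) (p.2.1, p.2.2) (q.2.1, q.2.2) else 0

/-- the dynamical Yang–Baxter equation for R (no spectral parameter) -/
def DYBE (R : (Fin N → ℂ) → Matrix (Fin N × Fin N) (Fin N × Fin N) ℂ) : Prop :=
  ∀ x : Fin N → ℂ,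
    sh12 N R x γ * sh13 N R x (-γ) * sh23 N R x γ =
    sh23 N R x (-γ) * sh13 N R x γ * sh12 N R x (-γ)

/-- zero-weight condition on R -/
def ZeroWeight (R : (Fin N → ℂ) → Matrix (Fin N × Fin N) (Fin N × Fin N) ℂ) : Prop :=
  ∀ x : Fin N → ℂ, ∀ i j k l : Fin N,
    (Pi.single i 1 : Fin N → ℂ) + Pi.single j 1 ≠
      (Pi.single k 1 : Fin N → ℂ) + Pi.single l 1 →
    R x (i, j) (k, l) = 0

/-- translation condition on R -/
def TransInv (R : (Fin N → ℂ) → Matrix (Fin N × Fin N) (Fin N × Fin N) ℂ) : Prop :=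
  ∀ x : Fin N → ℂ, ∀ t : ℂ, ∀ i j k l : Fin N,
    R (x + t • ((Pi.single i 1 : Fin N → ℂ) + Pi.single j 1)) (i, j) (k, l) =
      R x (i, j) (k, l)

/-- δ_{σ(s)} + … + δ_{σ(t−1)} : sum of basis vectors carried by the factors with
    0-based positions in [s,t); this realizes the dynamical shift h^{(s+1,t)}
    (1-based labels) -/
def hsum (p : ℕ) (s t : ℕ) (σ : Fin p → Fin N) : Fin N → ℂ :=
  ∑ i : Fin p, if s ≤ (i : ℕ) ∧ (i : ℕ) < t then (Pi.single (σ i) 1 : Fin N → ℂ) else 0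

/-- R placed in (0-based) factors a, b of (ℂ^N)^{⊗p}, with σ-dependent
    evaluation point `f σ` (the dynamical shift) -/
def RPair (R : (Fin N → ℂ) → Matrix (Fin N × Fin N) (Fin N × Fin N) ℂ)
    (p : ℕ) (a b : ℕ) (f : (Fin p → Fin N) → Fin N → ℂ) :
    Matrix (Fin p → Fin N) (Fin p → Fin N) ℂ :=
  if h : a < p ∧ b < p then
    Matrix.of fun σ σ' =>
      if ∀ i : Fin p, (i : ℕ) ≠ a → (i : ℕ) ≠ b → σ i = σ' i then
        R (f σ) (σ ⟨a, h.1⟩, σ ⟨b, h.2⟩) (σ' ⟨a, h.1⟩, σ' ⟨b, h.2⟩)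
      else 0
  else 1

/-- R̂ = P·R placed in (0-based) factors a, b -/
def RhatPair (R : (Fin N → ℂ) → Matrix (Fin N × Fin N) (Fin N × Fin N) ℂ)
    (p : ℕ) (a b : ℕ) (f : (Fin p → Fin N) → Fin N → ℂ) :
    Matrix (Fin p → Fin N) (Fin p → Fin N) ℂ :=
  if h : a < p ∧ b < p then
    Matrix.of fun σ σ' =>
      if ∀ i : Fin p, (i : ℕ) ≠ a → (i : ℕ) ≠ b → σ i = σ' i then
        R (f σ) (σ ⟨b, h.2⟩, σ ⟨a, h.1⟩) (σ' ⟨a, h.1⟩, σ' ⟨b, h.2⟩)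
      else 0
  else 1

/-- 𝓘^{(k,l)} (1-based labels k..l):
    R̂_{k,k+1}(·−2γh^{(k+2,l)}) R̂_{k+1,k+2}(·−2γh^{(k+3,l)}) ⋯ R̂_{l−1,l}(·),
    where `base σ` is the evaluation point (allowing σ-dependent shifts) -/
def calI (R : (Fin N → ℂ) → Matrix (Fin N × Fin N) (Fin N × Fin N) ℂ)
    (p : ℕ) (k l : ℕ) (base : (Fin p → Fin N) → Fin N → ℂ) :
    Matrix (Fin p → Fin N) (Fin p → Fin N) ℂ :=
  ((List.range' k (l - k)).map (fun j =>
    RhatPair N R p (j - 1) j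
      (fun σ => base σ - (2 * γ) • hsum N p (j + 1) l σ))).prod

/-- Q_i(x) = Π_{j=m}^{1} R_{i,n+j}(x − 2γh^{(i+1,n)} − 2γh^{(n+j+1,n+m)}),
    1-based label i, on (ℂ^N)^{⊗(n+m)} -/
def Qmat (R : (Fin N → ℂ) → Matrix (Fin N × Fin N) (Fin N × Fin N) ℂ)
    (n m : ℕ) (i : ℕ) (x : Fin N → ℂ) :
    Matrix (Fin (n + m) → Fin N) (Fin (n + m) → Fin N) ℂ :=
  (((List.range' 1 m).reverse).map (fun j =>
    RPair N R (n + m) (i - 1) (n + j - 1)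
      (fun σ => x - (2 * γ) • hsum N (n + m) i n σ
                  - (2 * γ) • hsum N (n + m) (n + j) (n + m) σ))).prod


lemma hE_lemma (R : (Fin N → ℂ) → Matrix (Fin N × Fin N) (Fin N × Fin N) ℂ)
    (hybe : DYBE N γ R) (x : Fin N → ℂ) (a b c a' b' c' : Fin N) :
    (∑ ζ : Fin N, ∑ β : Fin N, ∑ α : Fin N,
      R (x + γ • (Pi.single c 1 : Fin N → ℂ)) (a,b) (α,β) *
        (R (x + (-γ) • (Pi.single β 1 : Fin N → ℂ)) (α,c) (a',ζ) *
          R (x + γ • (Pi.single a' 1 : Fin N → ℂ)) (β,ζ) (b',c')))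
    = ∑ α' : Fin N, ∑ β' : Fin N, ∑ ζ' : Fin N,
      R (x + (-γ) • (Pi.single a 1 : Fin N → ℂ)) (b,c) (β',ζ') *
        (R (x + γ • (Pi.single β' 1 : Fin N → ℂ)) (a,ζ') (α',c') *
          R (x + (-γ) • (Pi.single c' 1 : Fin N → ℂ)) (α',β') (a',b')) := by
  have h := congrFun (congrFun (hybe x) (a,b,c)) (a',b',c')
  simp only [Matrix.mul_apply, sh12, sh13, sh23, Fintype.sum_prod_type, Finset.sum_mul,
    Finset.mul_sum, ite_mul, mul_ite, zero_mul, mul_zero, Finset.sum_ite_eq,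
    Finset.sum_ite_eq', Finset.sum_ite_irrel, Finset.sum_const_zero, Finset.mem_univ, if_true, mul_assoc] at h
  rw [Finset.sum_comm]
  exact h

local notation "sg" a:max => (Pi.single a 1 : Fin N → ℂ)

lemma key_pt (R : (Fin N → ℂ) → Matrix (Fin N × Fin N) (Fin N × Fin N) ℂ)
    (hzw : ZeroWeight N R) (htr : TransInv N R) (hybe : DYBE N γ R)
    (y : Fin N → ℂ) (σ₁ σ₂ σ₃ τ₁ τ₂ τ₃ : Fin N) :
    (∑ ζ : Fin N, ∑ w : Fin N, ∑ v : Fin N,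
      R y (σ₁,σ₃) (v,w) *
        (R (y - (2*γ) • sg w) (v,σ₂) (τ₁,ζ) * R y (w,ζ) (τ₂,τ₃)))
    = ∑ α : Fin N, ∑ v₃ : Fin N, ∑ w₃ : Fin N,
      R (y - (2*γ) • sg σ₁) (σ₃,σ₂) (v₃,w₃) *
        (R y (σ₁,w₃) (α,τ₃) * R (y - (2*γ) • sg τ₃) (α,v₃) (τ₁,τ₂)) := by
  by_cases hS : ((sg σ₁) + (sg σ₂)) + (sg σ₃) = ((sg τ₁) + (sg τ₂)) + (sg τ₃)
  · set x₀ : Fin N → ℂ := y - γ • (((sg σ₁) + (sg σ₂)) + (sg σ₃)) with hx₀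
    have EL : (∑ ζ : Fin N, ∑ w : Fin N, ∑ v : Fin N,
        R y (σ₁,σ₃) (v,w) *
          (R (y - (2*γ) • sg w) (v,σ₂) (τ₁,ζ) * R y (w,ζ) (τ₂,τ₃)))
        = ∑ ζ : Fin N, ∑ w : Fin N, ∑ v : Fin N,
          R (x₀ + γ • sg σ₂) (σ₁,σ₃) (v,w) *
            (R (x₀ + (-γ) • sg w) (v,σ₂) (τ₁,ζ) *
              R (x₀ + γ • sg τ₁) (w,ζ) (τ₂,τ₃)) := by
      refine Finset.sum_congr rfl fun ζ _ => Finset.sum_congr rfl fun w _ =>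
        Finset.sum_congr rfl fun v _ => ?_
      by_cases h1 : ((sg σ₁) + (sg σ₃)) = ((sg v) + (sg w))
      · by_cases h3 : ((sg w) + (sg ζ)) = ((sg τ₂) + (sg τ₃))
        · have f1 : R (x₀ + γ • sg σ₂) (σ₁,σ₃) (v,w) = R y (σ₁,σ₃) (v,w) := by
            rw [show x₀ + γ • sg σ₂ = y + (-γ) • (((sg σ₁)) + (sg σ₃)) by
              rw [hx₀]; module]
            exact htr y (-γ) σ₁ σ₃ v w
          have f2 : R (x₀ + (-γ) • sg w) (v,σ₂) (τ₁,ζ)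
              = R (y - (2*γ) • sg w) (v,σ₂) (τ₁,ζ) := by
            rw [show x₀ + (-γ) • sg w
                = (y - (2*γ) • sg w) + (-γ) • (((sg v)) + (sg σ₂)) by
              rw [hx₀]; linear_combination (norm := module) (-γ : ℂ) • h1]
            exact htr _ (-γ) v σ₂ τ₁ ζ
          have f3 : R (x₀ + γ • sg τ₁) (w,ζ) (τ₂,τ₃) = R y (w,ζ) (τ₂,τ₃) := by
            rw [show x₀ + γ • sg τ₁ = y + (-γ) • (((sg w)) + (sg ζ)) by
              rw [hx₀]; linear_combination (norm := module) (-γ : ℂ) • hS + (γ : ℂ) • h3]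
            exact htr y (-γ) w ζ τ₂ τ₃
          rw [f1, f2, f3]
        · rw [hzw _ _ _ _ _ h3, hzw _ _ _ _ _ h3, mul_zero, mul_zero, mul_zero, mul_zero]
      · rw [hzw _ _ _ _ _ h1, hzw _ _ _ _ _ h1, zero_mul, zero_mul]
    have ER : (∑ α : Fin N, ∑ v₃ : Fin N, ∑ w₃ : Fin N,
        R (y - (2*γ) • sg σ₁) (σ₃,σ₂) (v₃,w₃) *
          (R y (σ₁,w₃) (α,τ₃) * R (y - (2*γ) • sg τ₃) (α,v₃) (τ₁,τ₂)))
        = ∑ α : Fin N, ∑ v₃ : Fin N, ∑ w₃ : Fin N,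
          R (x₀ + (-γ) • sg σ₁) (σ₃,σ₂) (v₃,w₃) *
            (R (x₀ + γ • sg v₃) (σ₁,w₃) (α,τ₃) *
              R (x₀ + (-γ) • sg τ₃) (α,v₃) (τ₁,τ₂)) := by
      refine Finset.sum_congr rfl fun α _ => Finset.sum_congr rfl fun v₃ _ =>
        Finset.sum_congr rfl fun w₃ _ => ?_
      have g1 : R (x₀ + (-γ) • sg σ₁) (σ₃,σ₂) (v₃,w₃)
          = R (y - (2*γ) • sg σ₁) (σ₃,σ₂) (v₃,w₃) := by
        rw [show x₀ + (-γ) • sg σ₁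
            = (y - (2*γ) • sg σ₁) + (-γ) • (((sg σ₃)) + (sg σ₂)) by rw [hx₀]; module]
        exact htr _ (-γ) σ₃ σ₂ v₃ w₃
      by_cases k1 : ((sg σ₃) + (sg σ₂)) = ((sg v₃) + (sg w₃))
      · by_cases k3 : ((sg α) + (sg v₃)) = ((sg τ₁) + (sg τ₂))
        · have g2 : R (x₀ + γ • sg v₃) (σ₁,w₃) (α,τ₃) = R y (σ₁,w₃) (α,τ₃) := by
            rw [show x₀ + γ • sg v₃ = y + (-γ) • (((sg σ₁)) + (sg w₃)) by
              rw [hx₀]; linear_combination (norm := module) (-γ : ℂ) • k1]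
            exact htr y (-γ) σ₁ w₃ α τ₃
          have g3 : R (x₀ + (-γ) • sg τ₃) (α,v₃) (τ₁,τ₂)
              = R (y - (2*γ) • sg τ₃) (α,v₃) (τ₁,τ₂) := by
            rw [show x₀ + (-γ) • sg τ₃
                = (y - (2*γ) • sg τ₃) + (-γ) • (((sg α)) + (sg v₃)) by
              rw [hx₀]; linear_combination (norm := module) (-γ : ℂ) • hS + (γ : ℂ) • k3]
            exact htr _ (-γ) α v₃ τ₁ τ₂
          rw [g1, g2, g3]
        · rw [g1, hzw _ _ _ _ _ k3, hzw _ _ _ _ _ k3, mul_zero, mul_zero, mul_zero, mul_zero]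
      · rw [hzw _ _ _ _ _ k1, hzw _ _ _ _ _ k1, zero_mul, zero_mul]
    rw [EL, ER]
    exact hE_lemma N γ R hybe x₀ σ₁ σ₃ σ₂ τ₁ τ₂ τ₃
  · rw [Finset.sum_eq_zero, Finset.sum_eq_zero]
    · intro α _
      refine Finset.sum_eq_zero fun v₃ _ => Finset.sum_eq_zero fun w₃ _ => ?_
      by_cases k1 : ((sg σ₃) + (sg σ₂)) = ((sg v₃) + (sg w₃))
      · by_cases k2 : ((sg σ₁) + (sg w₃)) = ((sg α) + (sg τ₃))
        · by_cases k3 : ((sg α) + (sg v₃)) = ((sg τ₁) + (sg τ₂))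
          · exact absurd (by linear_combination (norm := module) k1 + k2 + k3) hS
          · rw [hzw _ _ _ _ _ k3, mul_zero, mul_zero]
        · rw [hzw _ _ _ _ _ k2, zero_mul, mul_zero]
      · rw [hzw _ _ _ _ _ k1, zero_mul]
    · intro ζ _
      refine Finset.sum_eq_zero fun w _ => Finset.sum_eq_zero fun v _ => ?_
      by_cases h1 : ((sg σ₁) + (sg σ₃)) = ((sg v) + (sg w))
      · by_cases h2 : ((sg v) + (sg σ₂)) = ((sg τ₁) + (sg ζ))
        · by_cases h3 : ((sg w) + (sg ζ)) = ((sg τ₂) + (sg τ₃))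
          · exact absurd (by linear_combination (norm := module) h1 + h2 + h3) hS
          · rw [hzw _ _ _ _ _ h3, mul_zero, mul_zero]
        · rw [hzw _ _ _ _ _ h2, zero_mul, mul_zero]
      · rw [hzw _ _ _ _ _ h1, zero_mul]

/-- agreement off three (nat-indexed) positions -/
def Agr3 (p : ℕ) (a b c : ℕ) (σ τ : Fin p → Fin N) : Prop :=
  ∀ i : Fin p, (i : ℕ) ≠ a → (i : ℕ) ≠ b → (i : ℕ) ≠ c → σ i = τ i

instance (p a b c : ℕ) (σ τ : Fin p → Fin N) : Decidable (Agr3 N p a b c σ τ) := by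
  unfold Agr3; infer_instance

def Emb3 (p : ℕ) (a b c : ℕ) (ha : a < p) (hb : b < p) (hc : c < p)
    (W : (Fin p → Fin N) → Matrix (Fin N × Fin N × Fin N) (Fin N × Fin N × Fin N) ℂ) :
    Matrix (Fin p → Fin N) (Fin p → Fin N) ℂ :=
  Matrix.of fun σ τ =>
    if Agr3 N p a b c σ τ then
      W σ (σ ⟨a,ha⟩, σ ⟨b,hb⟩, σ ⟨c,hc⟩) (τ ⟨a,ha⟩, τ ⟨b,hb⟩, τ ⟨c,hc⟩)
    else 0

lemma upd3_apply_off {p : ℕ} {a b c : ℕ} (ha : a < p) (hb : b < p) (hc : c < p)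
    (σ : Fin p → Fin N) (v : Fin N × Fin N × Fin N) (i : Fin p)
    (h1 : (i:ℕ) ≠ a) (h2 : (i:ℕ) ≠ b) (h3 : (i:ℕ) ≠ c) :
    Function.update (Function.update (Function.update σ ⟨a,ha⟩ v.1) ⟨b,hb⟩ v.2.1) ⟨c,hc⟩ v.2.2 i
      = σ i := by
  rw [Function.update_of_ne (by simp [Fin.ext_iff, h3]),
      Function.update_of_ne (by simp [Fin.ext_iff, h2]),
      Function.update_of_ne (by simp [Fin.ext_iff, h1])]

lemma sum_collapse3 {p : ℕ} {a b c : ℕ} (ha : a < p) (hb : b < p) (hc : c < p)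
    (hab : a ≠ b) (hac : a ≠ c) (hbc : b ≠ c)
    (σ : Fin p → Fin N) (F : (Fin p → Fin N) → ℂ)
    (hF : ∀ ρ, ¬ Agr3 N p a b c σ ρ → F ρ = 0) :
    ∑ ρ : Fin p → Fin N, F ρ =
      ∑ v : Fin N × Fin N × Fin N,
        F (Function.update (Function.update (Function.update σ ⟨a,ha⟩ v.1) ⟨b,hb⟩ v.2.1)
            ⟨c,hc⟩ v.2.2) := by
  set u : Fin N × Fin N × Fin N → (Fin p → Fin N) := fun v =>
    Function.update (Function.update (Function.update σ ⟨a,ha⟩ v.1) ⟨b,hb⟩ v.2.1) ⟨c,hc⟩ v.2.2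
    with hu
  have hua : ∀ v, u v ⟨a,ha⟩ = v.1 := by
    intro v
    simp only [hu]
    rw [Function.update_of_ne (by simp [Fin.ext_iff, hac]),
        Function.update_of_ne (by simp [Fin.ext_iff, hab]), Function.update_self]
  have hub : ∀ v, u v ⟨b,hb⟩ = v.2.1 := by
    intro v
    simp only [hu]
    rw [Function.update_of_ne (by simp [Fin.ext_iff, hbc]), Function.update_self]
  have huc : ∀ v, u v ⟨c,hc⟩ = v.2.2 := by
    intro v; simp only [hu]; rw [Function.update_self]
  have hinj : Function.Injective u := by
    intro v w hvw
    have h1 := congrArg (fun f => f ⟨a,ha⟩) hvw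
    have h2 := congrArg (fun f => f ⟨b,hb⟩) hvw
    have h3 := congrArg (fun f => f ⟨c,hc⟩) hvw
    simp only [hua, hub, huc] at h1 h2 h3
    exact Prod.ext h1 (Prod.ext h2 h3)
  rw [show ∑ v : Fin N × Fin N × Fin N, F (u v) = ∑ ρ ∈ Finset.univ.image u, F ρ by
    rw [Finset.sum_image (fun v _ w _ h => hinj h)]]
  refine (Finset.sum_subset (Finset.subset_univ _) fun ρ _ hρ => hF ρ fun hagr => hρ ?_).symm
  refine Finset.mem_image.2 ⟨(ρ ⟨a,ha⟩, ρ ⟨b,hb⟩, ρ ⟨c,hc⟩), Finset.mem_univ _, ?_⟩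
  funext i
  by_cases h3 : (i:ℕ) = c
  · have : i = ⟨c,hc⟩ := Fin.ext h3
    rw [this, huc]
  · by_cases h2 : (i:ℕ) = b
    · have : i = ⟨b,hb⟩ := Fin.ext h2
      rw [this, hub]
    · by_cases h1 : (i:ℕ) = a
      · have : i = ⟨a,ha⟩ := Fin.ext h1
        rw [this, hua]
      · simp only [hu]
        exact (upd3_apply_off N ha hb hc σ (ρ ⟨a,ha⟩, ρ ⟨b,hb⟩, ρ ⟨c,hc⟩) i h1 h2 h3).trans
          (hagr i h1 h2 h3)

lemma Emb3_mul {p : ℕ} {a b c : ℕ} (ha : a < p) (hb : b < p) (hc : c < p)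
    (hab : a ≠ b) (hac : a ≠ c) (hbc : b ≠ c)
    (W W' : (Fin p → Fin N) → Matrix (Fin N × Fin N × Fin N) (Fin N × Fin N × Fin N) ℂ)
    (hW' : ∀ σ ρ, Agr3 N p a b c σ ρ → W' ρ = W' σ) :
    Emb3 N p a b c ha hb hc W * Emb3 N p a b c ha hb hc W' =
      Emb3 N p a b c ha hb hc (fun σ => W σ * W' σ) := by
  ext σ τ
  rw [Matrix.mul_apply]
  rw [sum_collapse3 N ha hb hc hab hac hbc σ
    (fun ρ => Emb3 N p a b c ha hb hc W σ ρ * Emb3 N p a b c ha hb hc W' ρ τ)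
    (fun ρ hρ => by
      simp only [Emb3, Matrix.of_apply]
      rw [if_neg hρ, zero_mul])]
  simp only [Emb3, Matrix.of_apply]
  have hua : ∀ v : Fin N × Fin N × Fin N,
      Function.update (Function.update (Function.update σ ⟨a,ha⟩ v.1) ⟨b,hb⟩ v.2.1)
        ⟨c,hc⟩ v.2.2 ⟨a,ha⟩ = v.1 := fun v => by
    rw [Function.update_of_ne (by simp [Fin.ext_iff, hac]),
        Function.update_of_ne (by simp [Fin.ext_iff, hab]), Function.update_self]
  have hub : ∀ v : Fin N × Fin N × Fin N,
      Function.update (Function.update (Function.update σ ⟨a,ha⟩ v.1) ⟨b,hb⟩ v.2.1)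
        ⟨c,hc⟩ v.2.2 ⟨b,hb⟩ = v.2.1 := fun v => by
    rw [Function.update_of_ne (by simp [Fin.ext_iff, hbc]), Function.update_self]
  have huc : ∀ v : Fin N × Fin N × Fin N,
      Function.update (Function.update (Function.update σ ⟨a,ha⟩ v.1) ⟨b,hb⟩ v.2.1)
        ⟨c,hc⟩ v.2.2 ⟨c,hc⟩ = v.2.2 := fun v => Function.update_self _ _ _
  have hagr1 : ∀ v : Fin N × Fin N × Fin N, Agr3 N p a b c σ
      (Function.update (Function.update (Function.update σ ⟨a,ha⟩ v.1) ⟨b,hb⟩ v.2.1)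
        ⟨c,hc⟩ v.2.2) := fun v i h1 h2 h3 =>
    (upd3_apply_off N ha hb hc σ v i h1 h2 h3).symm
  have hagr2 : ∀ v : Fin N × Fin N × Fin N, Agr3 N p a b c
      (Function.update (Function.update (Function.update σ ⟨a,ha⟩ v.1) ⟨b,hb⟩ v.2.1)
        ⟨c,hc⟩ v.2.2) τ ↔ Agr3 N p a b c σ τ := by
    intro v
    constructor
    · intro h i h1 h2 h3
      rw [← upd3_apply_off N ha hb hc σ v i h1 h2 h3]
      exact h i h1 h2 h3
    · intro h i h1 h2 h3
      exact (upd3_apply_off N ha hb hc σ v i h1 h2 h3).trans (h i h1 h2 h3)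
  by_cases hst : Agr3 N p a b c σ τ
  · rw [if_pos hst, Matrix.mul_apply]
    refine Finset.sum_congr rfl fun v _ => ?_
    rw [if_pos (hagr1 v), if_pos ((hagr2 v).2 hst), hua v, hub v, huc v,
      hW' σ _ (hagr1 v)]
  · rw [if_neg hst]
    refine Finset.sum_eq_zero fun v _ => ?_
    rw [if_neg (fun h => hst ((hagr2 v).1 h)), mul_zero]

def shat23 (S : (Fin N → ℂ) → Matrix (Fin N × Fin N) (Fin N × Fin N) ℂ)
    (x : Fin N → ℂ) (s : ℂ) :
    Matrix (Fin N × Fin N × Fin N) (Fin N × Fin N × Fin N) ℂ :=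
  fun p q => if p.1 = q.1 then
    S (x + s • (Pi.single q.1 1 : Fin N → ℂ)) (p.2.2, p.2.1) (q.2.1, q.2.2) else 0

lemma key3 (R : (Fin N → ℂ) → Matrix (Fin N × Fin N) (Fin N × Fin N) ℂ)
    (hzw : ZeroWeight N R) (htr : TransInv N R) (hybe : DYBE N γ R) (y : Fin N → ℂ) :
    sh13 N R y 0 * sh12 N R y (-(2*γ)) * shat23 N R y 0 =
      shat23 N R y (-(2*γ)) * sh13 N R y 0 * sh12 N R y (-(2*γ)) := by
  ext ⟨σ₁, σ₂, σ₃⟩ ⟨τ₁, τ₂, τ₃⟩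
  simp only [Matrix.mul_apply, sh12, sh13, shat23, Fintype.sum_prod_type, Finset.sum_mul,
    Finset.mul_sum, ite_mul, mul_ite, zero_mul, mul_zero, Finset.sum_ite_eq,
    Finset.sum_ite_eq', Finset.sum_ite_irrel, Finset.sum_const_zero, Finset.mem_univ,
    if_true, mul_assoc, zero_smul, add_zero, neg_smul, ← sub_eq_add_neg]
  exact key_pt N γ R hzw htr hybe y σ₁ σ₂ σ₃ τ₁ τ₂ τ₃

section Ident
variable {p a k l : ℕ} (ha : a < p) (hk : k < p) (hl : l < p)
  (hak : a ≠ k) (hal : a ≠ l) (hkl : k ≠ l)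
  (R : (Fin N → ℂ) → Matrix (Fin N × Fin N) (Fin N × Fin N) ℂ)
  (g : (Fin p → Fin N) → Fin N → ℂ)

set_option linter.unusedSectionVars false
include hk hak hal hkl

lemma ident1 : RPair N R p a l g = Emb3 N p a k l ha hk hl (fun σ => sh13 N R (g σ) 0) := by
  ext σ τ
  rw [RPair, dif_pos ⟨ha, hl⟩]
  simp only [Matrix.of_apply, Emb3, sh13, zero_smul, add_zero]
  by_cases hA : Agr3 N p a k l σ τ
  · by_cases he : σ ⟨k,hk⟩ = τ ⟨k,hk⟩
    · rw [if_pos hA, if_pos he, if_pos ?_]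
      intro i h1 h2
      by_cases h : (i:ℕ) = k
      · rw [show i = ⟨k,hk⟩ from Fin.ext h]; exact he
      · exact hA i h1 h h2
    · rw [if_pos hA, if_neg he, if_neg ?_]
      intro hC
      exact he (hC ⟨k,hk⟩ (Ne.symm hak) (hkl))
  · rw [if_neg hA, if_neg ?_]
    intro hC
    exact hA fun i h1 h2 h3 => hC i h1 h3

lemma ident2 : RPair N R p a k (fun σ => g σ - (2*γ) • (Pi.single (σ ⟨l,hl⟩) 1 : Fin N → ℂ))
    = Emb3 N p a k l ha hk hl (fun σ => sh12 N R (g σ) (-(2*γ))) := by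
  ext σ τ
  rw [RPair, dif_pos ⟨ha, hk⟩]
  simp only [Matrix.of_apply, Emb3, sh12]
  by_cases hA : Agr3 N p a k l σ τ
  · by_cases he : σ ⟨l,hl⟩ = τ ⟨l,hl⟩
    · rw [if_pos hA, if_pos he, if_pos ?_, ← he, neg_smul, ← sub_eq_add_neg]
      intro i h1 h2
      by_cases h : (i:ℕ) = l
      · rw [show i = ⟨l,hl⟩ from Fin.ext h]; exact he
      · exact hA i h1 h2 h
    · rw [if_pos hA, if_neg he, if_neg ?_]
      intro hC
      exact he (hC ⟨l,hl⟩ (Ne.symm hal) (Ne.symm hkl))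
  · rw [if_neg hA, if_neg ?_]
    intro hC
    exact hA fun i h1 h2 h3 => hC i h1 h2

lemma ident3 : RhatPair N R p k l g
    = Emb3 N p a k l ha hk hl (fun σ => shat23 N R (g σ) 0) := by
  ext σ τ
  rw [RhatPair, dif_pos ⟨hk, hl⟩]
  simp only [Matrix.of_apply, Emb3, shat23, zero_smul, add_zero]
  by_cases hA : Agr3 N p a k l σ τ
  · by_cases he : σ ⟨a,ha⟩ = τ ⟨a,ha⟩
    · rw [if_pos hA, if_pos he, if_pos ?_]
      intro i h1 h2
      by_cases h : (i:ℕ) = a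
      · rw [show i = ⟨a,ha⟩ from Fin.ext h]; exact he
      · exact hA i h h1 h2
    · rw [if_pos hA, if_neg he, if_neg ?_]
      intro hC
      exact he (hC ⟨a,ha⟩ hak hal)
  · rw [if_neg hA, if_neg ?_]
    intro hC
    exact hA fun i h1 h2 h3 => hC i h2 h3

lemma ident4 : RhatPair N R p k l
      (fun σ => g σ - (2*γ) • (Pi.single (σ ⟨a,ha⟩) 1 : Fin N → ℂ))
    = Emb3 N p a k l ha hk hl (fun σ => shat23 N R (g σ) (-(2*γ))) := by
  ext σ τ
  rw [RhatPair, dif_pos ⟨hk, hl⟩]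
  simp only [Matrix.of_apply, Emb3, shat23]
  by_cases hA : Agr3 N p a k l σ τ
  · by_cases he : σ ⟨a,ha⟩ = τ ⟨a,ha⟩
    · rw [if_pos hA, if_pos he, if_pos ?_, ← he, neg_smul, ← sub_eq_add_neg]
      intro i h1 h2
      by_cases h : (i:ℕ) = a
      · rw [show i = ⟨a,ha⟩ from Fin.ext h]; exact he
      · exact hA i h h1 h2
    · rw [if_pos hA, if_neg he, if_neg ?_]
      intro hC
      exact he (hC ⟨a,ha⟩ hak hal)
  · rw [if_neg hA, if_neg ?_]
    intro hC
    exact hA fun i h1 h2 h3 => hC i h2 h3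

lemma L2 (hzw : ZeroWeight N R) (htr : TransInv N R) (hybe : DYBE N γ R)
    (hg : ∀ σ ρ, Agr3 N p a k l σ ρ → g ρ = g σ) :
    RPair N R p a l g *
      RPair N R p a k (fun σ => g σ - (2*γ) • (Pi.single (σ ⟨l,hl⟩) 1 : Fin N → ℂ)) *
      RhatPair N R p k l g =
    RhatPair N R p k l
        (fun σ => g σ - (2*γ) • (Pi.single (σ ⟨a,ha⟩) 1 : Fin N → ℂ)) *
      RPair N R p a l g *
      RPair N R p a k (fun σ => g σ - (2*γ) • (Pi.single (σ ⟨l,hl⟩) 1 : Fin N → ℂ)) := by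
  rw [ident1 N ha hk hl hak hal hkl R g, ident2 N γ ha hk hl hak hal hkl R g,
    ident3 N ha hk hl hak hal hkl R g, ident4 N γ ha hk hl hak hal hkl R g]
  rw [Emb3_mul N ha hk hl hak hal hkl _ _ (fun σ ρ h => by rw [hg σ ρ h]),
    Emb3_mul N ha hk hl hak hal hkl _ _ (fun σ ρ h => by rw [hg σ ρ h]),
    Emb3_mul N ha hk hl hak hal hkl _ _ (fun σ ρ h => by rw [hg σ ρ h]),
    Emb3_mul N ha hk hl hak hal hkl _ _ (fun σ ρ h => by rw [hg σ ρ h])]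
  exact congrArg (Emb3 N p a k l ha hk hl)
    (funext fun σ => key3 N γ R hzw htr hybe (g σ))

end Ident

section L1sec
variable {p a b c d : ℕ} (ha : a < p) (hb : b < p) (hc : c < p) (hd : d < p)
  (hab : a ≠ b) (hcd : c ≠ d) (hac : a ≠ c) (had : a ≠ d) (hbc : b ≠ c) (hbd : b ≠ d)
  (R : (Fin N → ℂ) → Matrix (Fin N × Fin N) (Fin N × Fin N) ℂ)
  (f g : (Fin p → Fin N) → Fin N → ℂ)

set_option linter.unusedSectionVars false
include hab hcd hac had hbc hbd

lemma L1 (hzw : ZeroWeight N R)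
    (hf : ∀ σ τ : Fin p → Fin N, (∀ i : Fin p, (i:ℕ) ≠ c → (i:ℕ) ≠ d → σ i = τ i) →
      (Pi.single (σ ⟨c,hc⟩) 1 : Fin N → ℂ) + Pi.single (σ ⟨d,hd⟩) 1 =
        (Pi.single (τ ⟨c,hc⟩) 1 : Fin N → ℂ) + Pi.single (τ ⟨d,hd⟩) 1 → f τ = f σ)
    (hg : ∀ σ τ : Fin p → Fin N, (∀ i : Fin p, (i:ℕ) ≠ a → (i:ℕ) ≠ b → σ i = τ i) →
      (Pi.single (σ ⟨a,ha⟩) 1 : Fin N → ℂ) + Pi.single (σ ⟨b,hb⟩) 1 =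
        (Pi.single (τ ⟨a,ha⟩) 1 : Fin N → ℂ) + Pi.single (τ ⟨b,hb⟩) 1 → g τ = g σ) :
    RPair N R p a b f * RhatPair N R p c d g =
      RhatPair N R p c d g * RPair N R p a b f := by
  rw [RPair, RhatPair, dif_pos (⟨ha, hb⟩ : a < p ∧ b < p),
    dif_pos (⟨hc, hd⟩ : c < p ∧ d < p)]
  ext σ τ
  rw [Matrix.mul_apply, Matrix.mul_apply]
  set ρ₁ : Fin p → Fin N := Function.update (Function.update σ ⟨a,ha⟩ (τ ⟨a,ha⟩)) ⟨b,hb⟩ (τ ⟨b,hb⟩) with hρ₁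
  set ρ₂ : Fin p → Fin N := Function.update (Function.update σ ⟨c,hc⟩ (τ ⟨c,hc⟩)) ⟨d,hd⟩ (τ ⟨d,hd⟩) with hρ₂
  have hρ₁a : ρ₁ ⟨a,ha⟩ = τ ⟨a,ha⟩ := by
    rw [hρ₁, Function.update_of_ne (by simp [Fin.ext_iff, hab]), Function.update_self]
  have hρ₁b : ρ₁ ⟨b,hb⟩ = τ ⟨b,hb⟩ := by rw [hρ₁, Function.update_self]
  have hρ₁off : ∀ i : Fin p, (i:ℕ) ≠ a → (i:ℕ) ≠ b → ρ₁ i = σ i := by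
    intro i h1 h2
    rw [hρ₁, Function.update_of_ne (by simp [Fin.ext_iff, h2]),
      Function.update_of_ne (by simp [Fin.ext_iff, h1])]
  have hρ₂c : ρ₂ ⟨c,hc⟩ = τ ⟨c,hc⟩ := by
    rw [hρ₂, Function.update_of_ne (by simp [Fin.ext_iff, hcd]), Function.update_self]
  have hρ₂d : ρ₂ ⟨d,hd⟩ = τ ⟨d,hd⟩ := by rw [hρ₂, Function.update_self]
  have hρ₂off : ∀ i : Fin p, (i:ℕ) ≠ c → (i:ℕ) ≠ d → ρ₂ i = σ i := by
    intro i h1 h2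
    rw [hρ₂, Function.update_of_ne (by simp [Fin.ext_iff, h2]),
      Function.update_of_ne (by simp [Fin.ext_iff, h1])]
  rw [Finset.sum_eq_single ρ₁ ?z1 (fun h => absurd (Finset.mem_univ _) h),
    Finset.sum_eq_single ρ₂ ?z2 (fun h => absurd (Finset.mem_univ _) h)]
  · -- main computation
    simp only [Matrix.of_apply]
    rw [if_pos (fun i h1 h2 => (hρ₁off i h1 h2).symm),
      if_pos (fun i h1 h2 => (hρ₂off i h1 h2).symm)]
    have eC : ρ₁ ⟨c,hc⟩ = σ ⟨c,hc⟩ := hρ₁off ⟨c,hc⟩ (Ne.symm hac) (Ne.symm hbc)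
    have eD : ρ₁ ⟨d,hd⟩ = σ ⟨d,hd⟩ := hρ₁off ⟨d,hd⟩ (Ne.symm had) (Ne.symm hbd)
    have eA : ρ₂ ⟨a,ha⟩ = σ ⟨a,ha⟩ := hρ₂off ⟨a,ha⟩ hac had
    have eB : ρ₂ ⟨b,hb⟩ = σ ⟨b,hb⟩ := hρ₂off ⟨b,hb⟩ hbc hbd
    have cond1 : (∀ i : Fin p, (i:ℕ) ≠ c → (i:ℕ) ≠ d → ρ₁ i = τ i) ↔
        (∀ i : Fin p, (i:ℕ) ≠ a → (i:ℕ) ≠ b → (i:ℕ) ≠ c → (i:ℕ) ≠ d → σ i = τ i) := by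
      constructor
      · intro h i h1 h2 h3 h4
        rw [← hρ₁off i h1 h2]; exact h i h3 h4
      · intro h i h3 h4
        by_cases h1 : (i:ℕ) = a
        · rw [show i = ⟨a,ha⟩ from Fin.ext h1]; exact hρ₁a
        · by_cases h2 : (i:ℕ) = b
          · rw [show i = ⟨b,hb⟩ from Fin.ext h2]; exact hρ₁b
          · rw [hρ₁off i h1 h2]; exact h i h1 h2 h3 h4
    have cond2 : (∀ i : Fin p, (i:ℕ) ≠ a → (i:ℕ) ≠ b → ρ₂ i = τ i) ↔
        (∀ i : Fin p, (i:ℕ) ≠ a → (i:ℕ) ≠ b → (i:ℕ) ≠ c → (i:ℕ) ≠ d → σ i = τ i) := by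
      constructor
      · intro h i h1 h2 h3 h4
        rw [← hρ₂off i h3 h4]; exact h i h1 h2
      · intro h i h1 h2
        by_cases h3 : (i:ℕ) = c
        · rw [show i = ⟨c,hc⟩ from Fin.ext h3]; exact hρ₂c
        · by_cases h4 : (i:ℕ) = d
          · rw [show i = ⟨d,hd⟩ from Fin.ext h4]; exact hρ₂d
          · rw [hρ₂off i h3 h4]; exact h i h1 h2 h3 h4
    by_cases hoff : ∀ i : Fin p, (i:ℕ) ≠ a → (i:ℕ) ≠ b → (i:ℕ) ≠ c → (i:ℕ) ≠ d → σ i = τ i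
    · rw [if_pos (cond1.2 hoff), if_pos (cond2.2 hoff), hρ₁a, hρ₁b, hρ₂c, hρ₂d,
        eC, eD, eA, eB]
      by_cases w1 : (Pi.single (σ ⟨a,ha⟩) 1 : Fin N → ℂ) + Pi.single (σ ⟨b,hb⟩) 1 =
          (Pi.single (τ ⟨a,ha⟩) 1 : Fin N → ℂ) + Pi.single (τ ⟨b,hb⟩) 1
      · by_cases w2 : (Pi.single (σ ⟨d,hd⟩) 1 : Fin N → ℂ) + Pi.single (σ ⟨c,hc⟩) 1 =
            (Pi.single (τ ⟨c,hc⟩) 1 : Fin N → ℂ) + Pi.single (τ ⟨d,hd⟩) 1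
        · rw [hg σ ρ₁ (fun i h1 h2 => (hρ₁off i h1 h2).symm)
              (by rw [hρ₁a, hρ₁b]; exact w1),
            hf σ ρ₂ (fun i h1 h2 => (hρ₂off i h1 h2).symm)
              (by rw [hρ₂c, hρ₂d]; linear_combination (norm := module) w2)]
          ring
        · rw [hzw _ _ _ _ _ w2, hzw _ _ _ _ _ w2, mul_zero, zero_mul]
      · rw [hzw _ _ _ _ _ w1, hzw _ _ _ _ _ w1, zero_mul, mul_zero]
    · rw [if_neg (fun h => hoff (cond1.1 h)), if_neg (fun h => hoff (cond2.1 h)),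
        mul_zero, mul_zero]
  · intro ρ _ hρ
    simp only [Matrix.of_apply]
    by_cases h1 : ∀ i : Fin p, (i:ℕ) ≠ c → (i:ℕ) ≠ d → σ i = ρ i
    · by_cases h2 : ∀ i : Fin p, (i:ℕ) ≠ a → (i:ℕ) ≠ b → ρ i = τ i
      · exfalso
        apply hρ
        funext i
        by_cases ic : (i:ℕ) = c
        · rw [show i = ⟨c,hc⟩ from Fin.ext ic, hρ₂c]
          exact h2 ⟨c,hc⟩ (Ne.symm hac) (Ne.symm hbc)
        · by_cases id : (i:ℕ) = d
          · rw [show i = ⟨d,hd⟩ from Fin.ext id, hρ₂d]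
            exact h2 ⟨d,hd⟩ (Ne.symm had) (Ne.symm hbd)
          · rw [hρ₂off i ic id]; exact (h1 i ic id).symm
      · rw [if_neg h2, mul_zero]
    · rw [if_neg h1, zero_mul]

  · intro ρ _ hρ
    simp only [Matrix.of_apply]
    by_cases h1 : ∀ i : Fin p, (i:ℕ) ≠ a → (i:ℕ) ≠ b → σ i = ρ i
    · by_cases h2 : ∀ i : Fin p, (i:ℕ) ≠ c → (i:ℕ) ≠ d → ρ i = τ i
      · exfalso
        apply hρ
        funext i
        by_cases ia : (i:ℕ) = a
        · rw [show i = ⟨a,ha⟩ from Fin.ext ia, hρ₁a]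
          exact h2 ⟨a,ha⟩ hac had
        · by_cases ib : (i:ℕ) = b
          · rw [show i = ⟨b,hb⟩ from Fin.ext ib, hρ₁b]
            exact h2 ⟨b,hb⟩ hbc hbd
          · rw [hρ₁off i ia ib]; exact (h1 i ia ib).symm
      · rw [if_neg h2, mul_zero]
    · rw [if_neg h1, zero_mul]
end L1sec


section Hsum
variable {p s t : ℕ} (σ ρ : Fin p → Fin N)

lemma hsum_congr (h : ∀ i : Fin p, s ≤ (i:ℕ) → (i:ℕ) < t → σ i = ρ i) :
    hsum N p s t σ = hsum N p s t ρ := by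
  refine Finset.sum_congr rfl fun i _ => ?_
  by_cases hc : s ≤ (i:ℕ) ∧ (i:ℕ) < t
  · rw [if_pos hc, if_pos hc, h i hc.1 hc.2]
  · rw [if_neg hc, if_neg hc]

lemma hsum_zero (h : t ≤ s) : hsum N p s t σ = 0 := by
  refine Finset.sum_eq_zero fun i _ => if_neg (by omega)

lemma hsum_succ (hs : s < p) (hst : s < t) :
    hsum N p s t σ = (Pi.single (σ ⟨s,hs⟩) 1 : Fin N → ℂ) + hsum N p (s+1) t σ := by
  have h1 : hsum N p s t σ = (if s ≤ ((⟨s,hs⟩ : Fin p):ℕ) ∧ ((⟨s,hs⟩ : Fin p):ℕ) < t then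
        (Pi.single (σ ⟨s,hs⟩) 1 : Fin N → ℂ) else 0)
      + ∑ i ∈ Finset.univ.erase (⟨s,hs⟩ : Fin p),
        (if s ≤ (i:ℕ) ∧ (i:ℕ) < t then (Pi.single (σ i) 1 : Fin N → ℂ) else 0) := by
    rw [hsum, ← Finset.add_sum_erase _ _ (Finset.mem_univ _)]
  have h2 : hsum N p (s+1) t σ = (if s+1 ≤ ((⟨s,hs⟩ : Fin p):ℕ) ∧ ((⟨s,hs⟩ : Fin p):ℕ) < t then
        (Pi.single (σ ⟨s,hs⟩) 1 : Fin N → ℂ) else 0)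
      + ∑ i ∈ Finset.univ.erase (⟨s,hs⟩ : Fin p),
        (if s+1 ≤ (i:ℕ) ∧ (i:ℕ) < t then (Pi.single (σ i) 1 : Fin N → ℂ) else 0) := by
    rw [hsum, ← Finset.add_sum_erase _ _ (Finset.mem_univ _)]
  rw [h1, h2, if_pos (by simp [hst]), if_neg (by simp), zero_add]
  congr 1
  refine Finset.sum_congr rfl fun i hi => ?_
  have hne : (i:ℕ) ≠ s := by
    intro h
    exact (Finset.mem_erase.1 hi).1 (Fin.ext h)
  by_cases hc : s+1 ≤ (i:ℕ) ∧ (i:ℕ) < t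
  · rw [if_pos (by omega), if_pos hc]
  · rw [if_neg (by omega), if_neg hc]

lemma hsum_invar_in (A B : Fin p) (hAB : A ≠ B)
    (hA : s ≤ (A:ℕ) ∧ (A:ℕ) < t) (hB : s ≤ (B:ℕ) ∧ (B:ℕ) < t)
    (hoff : ∀ i : Fin p, i ≠ A → i ≠ B → σ i = ρ i)
    (hw : (Pi.single (σ A) 1 : Fin N → ℂ) + Pi.single (σ B) 1 =
      (Pi.single (ρ A) 1 : Fin N → ℂ) + Pi.single (ρ B) 1) :
    hsum N p s t σ = hsum N p s t ρ := by
  have hBe : B ∈ Finset.univ.erase A := Finset.mem_erase.2 ⟨Ne.symm hAB, Finset.mem_univ _⟩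
  have expand : ∀ χ : Fin p → Fin N, hsum N p s t χ =
      ((Pi.single (χ A) 1 : Fin N → ℂ) + Pi.single (χ B) 1)
      + ∑ i ∈ (Finset.univ.erase A).erase B,
        (if s ≤ (i:ℕ) ∧ (i:ℕ) < t then (Pi.single (χ i) 1 : Fin N → ℂ) else 0) := by
    intro χ
    rw [hsum, ← Finset.add_sum_erase _ _ (Finset.mem_univ A), if_pos hA,
      ← Finset.add_sum_erase _ _ hBe, if_pos hB, add_assoc]
  rw [expand σ, expand ρ, hw]
  congr 1
  refine Finset.sum_congr rfl fun i hi => ?_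
  have h1 := Finset.mem_erase.1 hi
  have h2 := Finset.mem_erase.1 h1.2
  by_cases hc : s ≤ (i:ℕ) ∧ (i:ℕ) < t
  · rw [if_pos hc, if_pos hc, hoff i h2.1 h1.1]
  · rw [if_neg hc, if_neg hc]

lemma hsum_invar_mixed (A B : Fin p) (hAB : A ≠ B)
    (hA : ¬(s ≤ (A:ℕ) ∧ (A:ℕ) < t)) (hB : s ≤ (B:ℕ) ∧ (B:ℕ) < t)
    (hoff : ∀ i : Fin p, i ≠ A → i ≠ B → σ i = ρ i)
    (hw : (Pi.single (σ A) 1 : Fin N → ℂ) + Pi.single (σ B) 1 =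
      (Pi.single (ρ A) 1 : Fin N → ℂ) + Pi.single (ρ B) 1) :
    (Pi.single (σ A) 1 : Fin N → ℂ) + hsum N p s t σ =
      (Pi.single (ρ A) 1 : Fin N → ℂ) + hsum N p s t ρ := by
  have expand : ∀ χ : Fin p → Fin N,
      (Pi.single (χ A) 1 : Fin N → ℂ) + hsum N p s t χ =
      ((Pi.single (χ A) 1 : Fin N → ℂ) + Pi.single (χ B) 1)
      + ∑ i ∈ Finset.univ.erase B,
        (if s ≤ (i:ℕ) ∧ (i:ℕ) < t then (Pi.single (χ i) 1 : Fin N → ℂ) else 0) := by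
    intro χ
    rw [hsum, ← Finset.add_sum_erase _ _ (Finset.mem_univ B), if_pos hB, ← add_assoc]
  rw [expand σ, expand ρ, hw]
  congr 1
  refine Finset.sum_congr rfl fun i hi => ?_
  have h1 := Finset.mem_erase.1 hi
  by_cases hc : s ≤ (i:ℕ) ∧ (i:ℕ) < t
  · have : i ≠ A := by
      intro h
      rw [h] at hc
      exact hA hc
    rw [if_pos hc, if_pos hc, hoff i this h1.1]
  · rw [if_neg hc, if_neg hc]

end Hsum

lemma prod_comm_left {I : Type*} [Fintype I] [DecidableEq I]
    (P : Matrix I I ℂ) (l : List ℕ) (F F' : ℕ → Matrix I I ℂ)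
    (h : ∀ j ∈ l, P * F j = F' j * P) :
    P * (l.map F).prod = (l.map F').prod * P := by
  induction l with
  | nil => simp
  | cons a tl ih =>
    simp only [List.map_cons, List.prod_cons]
    rw [← mul_assoc, h a (List.mem_cons_self), mul_assoc,
      ih (fun j hj => h j (List.mem_cons_of_mem a hj)), ← mul_assoc]

lemma prod_comm_right {I : Type*} [Fintype I] [DecidableEq I]
    (P : Matrix I I ℂ) (l : List ℕ) (F : ℕ → Matrix I I ℂ)
    (h : ∀ j ∈ l, F j * P = P * F j) :
    (l.map F).prod * P = P * (l.map F).prod := by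
  induction l with
  | nil => simp
  | cons a tl ih =>
    simp only [List.map_cons, List.prod_cons]
    rw [mul_assoc, ih (fun j hj => h j (List.mem_cons_of_mem a hj)), ← mul_assoc,
      h a (List.mem_cons_self), mul_assoc]

lemma sandwich {M : Type*} [Monoid M] (Phi K1 K0 Plo G G2 : M)
    (h1 : Plo * G = G * Plo) (h2 : K1 * K0 * G = G2 * (K1 * K0))
    (h3 : Phi * G2 = G2 * Phi) :
    Phi * (K1 * K0) * Plo * G = G2 * (Phi * (K1 * K0) * Plo) := by
  calc Phi * (K1*K0) * Plo * G = Phi * (K1*K0) * (Plo * G) := by rw [mul_assoc]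
    _ = Phi * (K1*K0) * (G * Plo) := by rw [h1]
    _ = Phi * ((K1*K0) * G) * Plo := by
        rw [← mul_assoc, mul_assoc Phi]
    _ = Phi * (G2 * (K1*K0)) * Plo := by rw [h2]
    _ = Phi * G2 * (K1*K0) * Plo := by rw [← mul_assoc]
    _ = G2 * Phi * (K1*K0) * Plo := by rw [h3]
    _ = G2 * (Phi * (K1*K0) * Plo) := by
        rw [mul_assoc G2 Phi, mul_assoc G2]

lemma stepB (R : (Fin N → ℂ) → Matrix (Fin N × Fin N) (Fin N × Fin N) ℂ)
    (hzw : ZeroWeight N R) (htr : TransInv N R) (hybe : DYBE N γ R)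
    (n m i c : ℕ) (hi1 : 1 ≤ i) (hin : i ≤ n) (hcn : n ≤ c) (hc2 : c + 2 ≤ n + m)
    (hn : 1 ≤ n) (x : Fin N → ℂ) :
    Qmat N γ R n m i x *
      RhatPair N R (n+m) c (c+1) (fun σ => x - (2*γ) • hsum N (n+m) i n σ
        - (2*γ) • hsum N (n+m) (c+2) (n+m) σ) =
    RhatPair N R (n+m) c (c+1) (fun σ => x - (2*γ) • hsum N (n+m) (i-1) n σ
        - (2*γ) • hsum N (n+m) (c+2) (n+m) σ) * Qmat N γ R n m i x := by
  have ha : i - 1 < n + m := by omega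
  have hk : c < n + m := by omega
  have hl : c + 1 < n + m := by omega
  set j₀ := c + 1 - n with hj₀
  have hj₀1 : 1 ≤ j₀ := by omega
  have hj₀m : j₀ + 1 ≤ m := by omega
  -- list decomposition
  have hsplit : List.range' 1 m =
      List.range' 1 (j₀-1) ++ (List.range' j₀ 2 ++ List.range' (j₀+2) (m-j₀-1)) := by
    have e2 := List.range'_append_1 (s := j₀) (m := 2) (n := m-j₀-1)
    have e1 := List.range'_append_1 (s := 1) (m := j₀-1) (n := 2+(m-j₀-1))
    rw [show 1+(j₀-1) = j₀ by omega,
      ← e2] at e1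
    rw [show (j₀-1+(2+(m-j₀-1)) : ℕ) = m by omega] at e1
    exact e1.symm
  have hQ : Qmat N γ R n m i x =
      ((List.range' (j₀+2) (m-j₀-1)).reverse.map (fun j =>
        RPair N R (n + m) (i - 1) (n + j - 1)
          (fun σ => x - (2 * γ) • hsum N (n + m) i n σ
                      - (2 * γ) • hsum N (n + m) (n + j) (n + m) σ))).prod *
      ((RPair N R (n + m) (i - 1) (c+1)
          (fun σ => x - (2 * γ) • hsum N (n + m) i n σ
                      - (2 * γ) • hsum N (n + m) (c+2) (n + m) σ)) *
        (RPair N R (n + m) (i - 1) c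
          (fun σ => x - (2 * γ) • hsum N (n + m) i n σ
                      - (2 * γ) • hsum N (n + m) (c+1) (n + m) σ))) *
      ((List.range' 1 (j₀-1)).reverse.map (fun j =>
        RPair N R (n + m) (i - 1) (n + j - 1)
          (fun σ => x - (2 * γ) • hsum N (n + m) i n σ
                      - (2 * γ) • hsum N (n + m) (n + j) (n + m) σ))).prod := by
    conv_lhs => rw [Qmat, hsplit]
    simp only [List.reverse_append, List.map_append, List.prod_append,
      show (List.range' j₀ 2).reverse = [j₀+1, j₀] from rfl,
      List.map_cons, List.map_nil, List.prod_cons, List.prod_nil, mul_one]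
    rw [show n+(j₀+1)-1 = c+1 by omega, show n+(j₀+1) = c+2 by omega,
      show n+j₀-1 = c by omega, show n+j₀ = c+1 by omega]
  -- rewrite K0's shift using hsum_succ
  have eK0 : (fun σ : Fin (n+m) → Fin N => x - (2 * γ) • hsum N (n + m) i n σ
        - (2 * γ) • hsum N (n + m) (c+1) (n + m) σ)
      = (fun σ : Fin (n+m) → Fin N => (x - (2 * γ) • hsum N (n + m) i n σ
        - (2 * γ) • hsum N (n + m) (c+2) (n + m) σ)
          - (2*γ) • (Pi.single (σ ⟨c+1, hl⟩) 1 : Fin N → ℂ)) := by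
    funext σ
    rw [hsum_succ N σ hl (show c+1 < n+m from hl)]
    module
  rw [hQ, eK0]
  -- the three commutation facts
  have h2 : RPair N R (n + m) (i - 1) (c+1)
          (fun σ => x - (2 * γ) • hsum N (n + m) i n σ
                      - (2 * γ) • hsum N (n + m) (c+2) (n + m) σ) *
        RPair N R (n + m) (i - 1) c
          (fun σ => (x - (2 * γ) • hsum N (n + m) i n σ
                      - (2 * γ) • hsum N (n + m) (c+2) (n + m) σ)
            - (2*γ) • (Pi.single (σ ⟨c+1, hl⟩) 1 : Fin N → ℂ)) *
        RhatPair N R (n+m) c (c+1) (fun σ => x - (2*γ) • hsum N (n+m) i n σ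
          - (2*γ) • hsum N (n+m) (c+2) (n+m) σ) =
      RhatPair N R (n+m) c (c+1) (fun σ => (x - (2*γ) • hsum N (n+m) i n σ
          - (2*γ) • hsum N (n+m) (c+2) (n+m) σ)
            - (2*γ) • (Pi.single (σ ⟨i-1, ha⟩) 1 : Fin N → ℂ)) *
        RPair N R (n + m) (i - 1) (c+1)
          (fun σ => x - (2 * γ) • hsum N (n + m) i n σ
                      - (2 * γ) • hsum N (n + m) (c+2) (n + m) σ) *
        RPair N R (n + m) (i - 1) c
          (fun σ => (x - (2 * γ) • hsum N (n + m) i n σ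
                      - (2 * γ) • hsum N (n + m) (c+2) (n + m) σ)
            - (2*γ) • (Pi.single (σ ⟨c+1, hl⟩) 1 : Fin N → ℂ)) :=
    L2 N γ ha hk hl (by omega) (by omega) (by omega) R
    (fun σ : Fin (n+m) → Fin N => x - (2 * γ) • hsum N (n + m) i n σ
        - (2 * γ) • hsum N (n + m) (c+2) (n + m) σ) hzw htr hybe
    (fun σ ρ hA => by
      have e1 : hsum N (n+m) i n ρ = hsum N (n+m) i n σ :=
        hsum_congr N ρ σ (fun i' hl1 hl2 =>
          (hA i' (by omega) (by omega) (by omega)).symm)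
      have e2 : hsum N (n+m) (c+2) (n+m) ρ = hsum N (n+m) (c+2) (n+m) σ :=
        hsum_congr N ρ σ (fun i' hl1 hl2 =>
          (hA i' (by omega) (by omega) (by omega)).symm)
      simp only [e1, e2])
  have h1 : (((List.range' 1 (j₀-1)).reverse.map (fun j =>
        RPair N R (n + m) (i - 1) (n + j - 1)
          (fun σ => x - (2 * γ) • hsum N (n + m) i n σ
                      - (2 * γ) • hsum N (n + m) (n + j) (n + m) σ))).prod) *
      RhatPair N R (n+m) c (c+1) (fun σ => x - (2*γ) • hsum N (n+m) i n σ
        - (2*γ) • hsum N (n+m) (c+2) (n+m) σ) =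
      RhatPair N R (n+m) c (c+1) (fun σ => x - (2*γ) • hsum N (n+m) i n σ
        - (2*γ) • hsum N (n+m) (c+2) (n+m) σ) *
      (((List.range' 1 (j₀-1)).reverse.map (fun j =>
        RPair N R (n + m) (i - 1) (n + j - 1)
          (fun σ => x - (2 * γ) • hsum N (n + m) i n σ
                      - (2 * γ) • hsum N (n + m) (n + j) (n + m) σ))).prod) := by
    refine prod_comm_right _ _ _ (fun j hj => ?_)
    rw [List.mem_reverse, List.mem_range'_1] at hj
    have hb : n + j - 1 < n + m := by omega
    refine L1 N (by omega : i-1 < n+m) hb hk hl (by omega) (by omega) (by omega)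
      (by omega) (by omega) (by omega) R _ _ hzw ?_ ?_
    · intro σ τ hoff hw
      have e1 : hsum N (n+m) i n τ = hsum N (n+m) i n σ :=
        hsum_congr N τ σ (fun i' hl1 hl2 => (hoff i' (by omega) (by omega)).symm)
      have e2 : hsum N (n+m) (n+j) (n+m) τ = hsum N (n+m) (n+j) (n+m) σ :=
        hsum_invar_in N τ σ ⟨c, hk⟩ ⟨c+1, hl⟩ (by simp [Fin.ext_iff])
          ⟨(by omega : n + j ≤ c), (by omega : c < n+m)⟩
          ⟨(by omega : n + j ≤ c+1), (by omega : c+1 < n+m)⟩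
          (fun i' u v => (hoff i' (fun h => u (Fin.ext h)) (fun h => v (Fin.ext h))).symm)
          hw.symm
      simp only [e1, e2]
    · intro σ τ hoff hw
      have e1 : hsum N (n+m) i n τ = hsum N (n+m) i n σ :=
        hsum_congr N τ σ (fun i' hl1 hl2 => (hoff i' (by omega) (by omega)).symm)
      have e2 : hsum N (n+m) (c+2) (n+m) τ = hsum N (n+m) (c+2) (n+m) σ :=
        hsum_congr N τ σ (fun i' hl1 hl2 => (hoff i' (by omega) (by omega)).symm)
      simp only [e1, e2]
  have h2' := h2.trans (mul_assoc _ _ _)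
  have h3 : (((List.range' (j₀+2) (m-j₀-1)).reverse.map (fun j =>
        RPair N R (n + m) (i - 1) (n + j - 1)
          (fun σ => x - (2 * γ) • hsum N (n + m) i n σ
                      - (2 * γ) • hsum N (n + m) (n + j) (n + m) σ))).prod) *
      RhatPair N R (n+m) c (c+1) (fun σ => (x - (2*γ) • hsum N (n+m) i n σ
        - (2*γ) • hsum N (n+m) (c+2) (n+m) σ)
          - (2*γ) • (Pi.single (σ ⟨i-1, ha⟩) 1 : Fin N → ℂ)) =
      RhatPair N R (n+m) c (c+1) (fun σ => (x - (2*γ) • hsum N (n+m) i n σ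
        - (2*γ) • hsum N (n+m) (c+2) (n+m) σ)
          - (2*γ) • (Pi.single (σ ⟨i-1, ha⟩) 1 : Fin N → ℂ)) *
      (((List.range' (j₀+2) (m-j₀-1)).reverse.map (fun j =>
        RPair N R (n + m) (i - 1) (n + j - 1)
          (fun σ => x - (2 * γ) • hsum N (n + m) i n σ
                      - (2 * γ) • hsum N (n + m) (n + j) (n + m) σ))).prod) := by
    refine (prod_comm_right _ _ _ (fun j hj => ?_)).symm.symm
    rw [List.mem_reverse, List.mem_range'_1] at hj
    have hb : n + j - 1 < n + m := by omega
    refine L1 N (by omega : i-1 < n+m) hb hk hl (by omega) (by omega) (by omega)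
      (by omega) (by omega) (by omega) R _ _ hzw ?_ ?_
    · intro σ τ hoff hw
      have e1 : hsum N (n+m) i n τ = hsum N (n+m) i n σ :=
        hsum_congr N τ σ (fun i' hl1 hl2 => (hoff i' (by omega) (by omega)).symm)
      have e2 : hsum N (n+m) (n+j) (n+m) τ = hsum N (n+m) (n+j) (n+m) σ :=
        hsum_congr N τ σ (fun i' hl1 hl2 => (hoff i' (by omega) (by omega)).symm)
      simp only [e1, e2]
    · intro σ τ hoff hw
      have e1 : hsum N (n+m) i n τ = hsum N (n+m) i n σ :=
        hsum_congr N τ σ (fun i' hl1 hl2 => (hoff i' (by omega) (by omega)).symm)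
      have emix : (Pi.single (τ ⟨i-1, ha⟩) 1 : Fin N → ℂ)
            + hsum N (n+m) (c+2) (n+m) τ
          = (Pi.single (σ ⟨i-1, ha⟩) 1 : Fin N → ℂ) + hsum N (n+m) (c+2) (n+m) σ :=
        hsum_invar_mixed N τ σ ⟨i-1, ha⟩ ⟨n+j-1, hb⟩ (by simp [Fin.ext_iff]; omega)
          (by simp only []; omega)
          ⟨(by omega : c+2 ≤ n+j-1), (by omega : n+j-1 < n+m)⟩
          (fun i' u v => (hoff i' (fun h => u (Fin.ext h)) (fun h => v (Fin.ext h))).symm)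
          hw.symm
      simp only [e1]
      linear_combination (norm := module) (-(2*γ)) • emix
  have hG1 : RhatPair N R (n+m) c (c+1) (fun σ => x - (2*γ) • hsum N (n+m) (i-1) n σ
        - (2*γ) • hsum N (n+m) (c+2) (n+m) σ)
      = RhatPair N R (n+m) c (c+1) (fun σ => (x - (2*γ) • hsum N (n+m) i n σ
        - (2*γ) • hsum N (n+m) (c+2) (n+m) σ)
          - (2*γ) • (Pi.single (σ ⟨i-1, ha⟩) 1 : Fin N → ℂ)) := by
    refine congrArg _ (funext fun σ => ?_)
    rw [hsum_succ N σ ha (show i-1 < n by omega), show i-1+1 = i by omega]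
    module
  rw [hG1]
  exact sandwich _ _ _ _ _ _ h1 h2' h3

lemma stepA (R : (Fin N → ℂ) → Matrix (Fin N × Fin N) (Fin N × Fin N) ℂ)
    (hzw : ZeroWeight N R) (htr : TransInv N R) (hybe : DYBE N γ R)
    (n m c : ℕ) (hn : 1 ≤ n) (hcn : n ≤ c) (hc2 : c + 2 ≤ n + m) (x : Fin N → ℂ) :
    ∀ d, d ≤ n →
    ((List.range' (n-d+1) d).map (fun i => Qmat N γ R n m i x)).prod *
      RhatPair N R (n+m) c (c+1) (fun σ => x - (2*γ) • hsum N (n+m) n n σ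
        - (2*γ) • hsum N (n+m) (c+2) (n+m) σ) =
    RhatPair N R (n+m) c (c+1) (fun σ => x - (2*γ) • hsum N (n+m) (n-d) n σ
        - (2*γ) • hsum N (n+m) (c+2) (n+m) σ) *
      ((List.range' (n-d+1) d).map (fun i => Qmat N γ R n m i x)).prod := by
  intro d
  induction d with
  | zero => intro _; simp
  | succ d ih =>
    intro hdn
    have hrange : List.range' (n-(d+1)+1) (d+1) = (n-d) :: List.range' (n-d+1) d := by
      rw [show n-(d+1)+1 = n-d by omega]
      rw [List.range'_succ]
    rw [hrange]
    simp only [List.map_cons, List.prod_cons]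
    rw [mul_assoc, ih (by omega), ← mul_assoc]
    have hsb := stepB N γ R hzw htr hybe n m (n-d) c (by omega) (by omega) hcn hc2 hn x
    rw [show n-d-1 = n-(d+1) by omega] at hsb
    have hQd : Qmat N γ R n m (n-d) x *
        RhatPair N R (n+m) c (c+1) (fun σ => x - (2*γ) • hsum N (n+m) (n-d) n σ
          - (2*γ) • hsum N (n+m) (c+2) (n+m) σ) =
        RhatPair N R (n+m) c (c+1) (fun σ => x - (2*γ) • hsum N (n+m) (n-(d+1)) n σ
          - (2*γ) • hsum N (n+m) (c+2) (n+m) σ) * Qmat N γ R n m (n-d) x := hsb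
    rw [hQd, mul_assoc]


theorem interchange_relation_star (hN : 2 ≤ N)
    (R : (Fin N → ℂ) → Matrix (Fin N × Fin N) (Fin N × Fin N) ℂ)
    (hzw : ZeroWeight N R) (htr : TransInv N R) (hybe : DYBE N γ R)
    (n m : ℕ) (hn : 1 ≤ n) (hm : 1 ≤ m) (x : Fin N → ℂ) :
    ((List.range' 1 n).map (fun i => Qmat N γ R n m i x)).prod *
      calI N γ R (n + m) (n + 1) (n + m) (fun _ => x) =
    calI N γ R (n + m) (n + 1) (n + m)
        (fun σ => x - (2 * γ) • hsum N (n + m) 0 n σ) *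
      ((List.range' 1 n).map (fun i => Qmat N γ R n m i x)).prod := by
  simp only [calI]
  refine prod_comm_left _ _ _ _ (fun j hj => ?_)
  rw [List.mem_range'_1] at hj
  obtain ⟨c, rfl⟩ : ∃ c, j = c + 1 := ⟨j - 1, by omega⟩
  have hcn : n ≤ c := by omega
  have hc2 : c + 2 ≤ n + m := by omega
  rw [show c + 1 - 1 = c by omega, show c + 1 + 1 = c + 2 by omega]
  have SA := stepA N γ R hzw htr hybe n m c hn hcn hc2 x n (le_refl n)
  rw [show n - n + 1 = 1 by omega, show n - n = 0 by omega] at SA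
  have e1 : RhatPair N R (n+m) c (c+1) (fun σ => x - (2*γ) • hsum N (n+m) n n σ
        - (2*γ) • hsum N (n+m) (c+2) (n+m) σ)
      = RhatPair N R (n+m) c (c+1) (fun σ => x - (2*γ) • hsum N (n+m) (c+2) (n+m) σ) := by
    refine congrArg _ (funext fun σ => ?_)
    rw [hsum_zero N σ (le_refl n)]
    module
  rw [e1] at SA
  exact SA
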